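/- arXiv:1409.7633 — 2 statements merged into one kernel-verified Lean document; each statement's English description precedes it below -/
import Mathlib

section
/- Let 𝔽_q have characteristic p, let f ∈ 𝔽_q[t][x], and define F(y_0,…,y_{p−1}) = f(∑_{j=0}^{p−1} t^j y_j^p) ∈ 𝔽_q[t][y_0,…,y_{p−1}]. For n ≥ 1 let Q = {a ∈ 𝔽_q[t]^p : deg a_i ≤ ⌊n/p⌋ for all 0 ≤ i < p, and there exists a prime polynomial P with deg P > n/2 dividing both F(a) and (∂F/∂t)(a)}. Then #{a ∈ M_n(q) : there exists a prime polynomial P with deg P > n/2 and P² ∣ f(a)} ≤ |Q|. -/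
open Polynomial

noncomputable section

/-- A prime polynomial: monic and irreducible. -/
def IsPrimePoly {F : Type*} [Field F] (P : Polynomial F) : Prop :=
  P.Monic ∧ Irreducible P

/-- `bigF p f` : the polynomial `F(y_0,…,y_{p-1}) = f(∑_{j<p} t^j·y_j^p)` in
`𝔽_q[t][y_0,…,y_{p-1}]`. -/
def bigF {F : Type*} [Field F] (p : ℕ) (f : Polynomial (Polynomial F)) :
    MvPolynomial (Fin p) (Polynomial F) :=
  Polynomial.eval₂ MvPolynomial.C
    (∑ j : Fin p, MvPolynomial.C (Polynomial.X ^ (j : ℕ)) * MvPolynomial.X j ^ p) f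

/-- The partial derivative with respect to `t` of a polynomial in
`𝔽_q[t][y_0,…,y_{p-1}]`, i.e. the coefficientwise `t`-derivative. -/
def pderivT {F : Type*} [Field F] {σ : Type*} (G : MvPolynomial σ (Polynomial F)) :
    MvPolynomial σ (Polynomial F) :=
  ∑ m ∈ G.support, MvPolynomial.monomial m (Polynomial.derivative (MvPolynomial.coeff m G))

section Aux

variable {F : Type*} [Field F] {σ : Type*}

lemma coeff_pderivT (G : MvPolynomial σ (Polynomial F)) (m : σ →₀ ℕ) :
    (pderivT G).coeff m = Polynomial.derivative (G.coeff m) := by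
  classical
  unfold pderivT
  rw [MvPolynomial.coeff_sum]
  simp only [MvPolynomial.coeff_monomial]
  rw [Finset.sum_ite_eq' G.support m]
  split
  · rfl
  · simp [MvPolynomial.notMem_support_iff.mp ‹_›]

lemma pderivT_add (G H : MvPolynomial σ (Polynomial F)) :
    pderivT (G + H) = pderivT G + pderivT H := by
  apply MvPolynomial.ext; intro m
  simp [coeff_pderivT, MvPolynomial.coeff_add]

lemma pderivT_C (a : Polynomial F) :
    pderivT (MvPolynomial.C (σ := σ) a) = MvPolynomial.C (Polynomial.derivative a) := by
  apply MvPolynomial.ext; intro m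
  classical
  simp only [coeff_pderivT, MvPolynomial.coeff_C]
  split <;> simp

lemma pderivT_mul_X (G : MvPolynomial σ (Polynomial F)) (i : σ) :
    pderivT (G * MvPolynomial.X i) = pderivT G * MvPolynomial.X i := by
  classical
  apply MvPolynomial.ext; intro m
  rw [coeff_pderivT, MvPolynomial.coeff_mul_X', MvPolynomial.coeff_mul_X', coeff_pderivT]
  split <;> simp

/-- Chain rule for the `t`-derivative of an evaluation. -/
lemma derivative_eval_CR {p : ℕ} (v : Fin p → Polynomial F)
    (G : MvPolynomial (Fin p) (Polynomial F)) :
    Polynomial.derivative (MvPolynomial.eval v G) =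
      MvPolynomial.eval v (pderivT G) +
        ∑ i : Fin p, MvPolynomial.eval v (MvPolynomial.pderiv i G) *
          Polynomial.derivative (v i) := by
  induction G using MvPolynomial.induction_on with
  | C a => simp [pderivT_C]
  | add G H hG hH =>
      simp only [map_add, derivative_add, hG, hH, pderivT_add, add_mul,
        Finset.sum_add_distrib]
      ring
  | mul_X G i hG =>
      simp only [map_mul, MvPolynomial.eval_X, derivative_mul, hG, pderivT_mul_X,
        MvPolynomial.pderiv_mul, MvPolynomial.pderiv_X, map_add, add_mul,
        Finset.sum_add_distrib]
      have h1 : ∀ j : Fin p,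
          MvPolynomial.eval v (G * MvPolynomial.pderiv j (MvPolynomial.X i)) *
            Polynomial.derivative (v j) =
          (if i = j then MvPolynomial.eval v G * Polynomial.derivative (v j) else 0) := by
        intro j
        by_cases h : i = j <;> simp [MvPolynomial.pderiv_X, h, Pi.single_apply]
      have h2 : ∀ x : Fin p, MvPolynomial.eval v G *
            MvPolynomial.eval v
              (Pi.single (M := fun _ => MvPolynomial (Fin p) (Polynomial F)) x 1 i) *
            Polynomial.derivative (v x) =
          if x = i then MvPolynomial.eval v G * Polynomial.derivative (v x) else 0 := by
        intro x; rcases eq_or_ne x i with h | h <;> simp [Pi.single_apply, h]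
      simp only [h2, Finset.sum_ite_eq', Finset.mem_univ, if_true, mul_right_comm,
        ← Finset.sum_mul]
      have h3 : ∀ x : Fin p, MvPolynomial.eval v (MvPolynomial.pderiv x G) * v i *
            Polynomial.derivative (v x) =
          v i * (MvPolynomial.eval v (MvPolynomial.pderiv x G) * Polynomial.derivative (v x)) :=
        fun x => by ring
      simp only [h3, ← Finset.mul_sum]
      ring

lemma eval_bigF (p : ℕ) (f : Polynomial (Polynomial F)) (v : Fin p → Polynomial F) :
    MvPolynomial.eval v (bigF p f) =
      f.eval (∑ j : Fin p, Polynomial.X ^ (j : ℕ) * v j ^ p) := by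
  unfold bigF
  rw [Polynomial.hom_eval₂]
  congr 1
  · exact RingHom.ext fun x => by simp
  · simp

lemma pderiv_bigF (p : ℕ) [CharP F p] (f : Polynomial (Polynomial F)) (i : Fin p) :
    MvPolynomial.pderiv i (bigF p f) = 0 := by
  have hs : MvPolynomial.pderiv i
      (∑ j : Fin p, MvPolynomial.C (Polynomial.X ^ (j : ℕ)) *
        (MvPolynomial.X j : MvPolynomial (Fin p) (Polynomial F)) ^ p) = 0 := by
    rw [map_sum]
    refine Finset.sum_eq_zero fun j _ => ?_
    rw [MvPolynomial.pderiv_C_mul, MvPolynomial.pderiv_pow]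
    have : ((p : ℕ) : MvPolynomial (Fin p) (Polynomial F)) = 0 := by
      exact_mod_cast CharP.cast_eq_zero (MvPolynomial (Fin p) (Polynomial F)) p
    rw [this]
    ring
  unfold bigF
  induction f using Polynomial.induction_on with
  | C a => simp [MvPolynomial.pderiv_C]
  | add g h hg hh => rw [Polynomial.eval₂_add, map_add, hg, hh, add_zero]
  | monomial k a hk =>
      rw [pow_succ, ← mul_assoc, Polynomial.eval₂_mul, MvPolynomial.pderiv_mul, hk,
        Polynomial.eval₂_X, hs]
      ring

/-- Key: the `t`-derivative of `f(∑ t^j v_j^p)` equals `(∂F/∂t)(v)`. -/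
lemma derivative_eval_bigF (p : ℕ) [CharP F p] (f : Polynomial (Polynomial F))
    (v : Fin p → Polynomial F) :
    MvPolynomial.eval v (pderivT (bigF p f)) =
      Polynomial.derivative (f.eval (∑ j : Fin p, Polynomial.X ^ (j : ℕ) * v j ^ p)) := by
  rw [← eval_bigF, derivative_eval_CR]
  simp [pderiv_bigF]

end Aux

section Decomp

variable {F : Type*} [Field F] [Fintype F]

lemma decomp (p : ℕ) [Fact p.Prime] [CharP F p] (n : ℕ) (a : Polynomial F)
    (ha : a.natDegree ≤ n) :
    ∑ j : Fin p, Polynomial.X ^ (j : ℕ) *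
      ((∑ k ∈ Finset.range (n / p + 1),
        Polynomial.C (a.coeff (p * k + (j : ℕ))) * Polynomial.X ^ k).map
          ((frobeniusEquiv F p).symm : F →+* F)) ^ p = a := by
  have hp : p.Prime := Fact.out
  have hp0 : 0 < p := hp.pos
  -- coefficients of the inner polynomial
  have hcoeff : ∀ (j d : ℕ),
      (∑ k ∈ Finset.range (n / p + 1),
        Polynomial.C (a.coeff (p * k + j)) * Polynomial.X ^ k).coeff d =
      if d ∈ Finset.range (n / p + 1) then a.coeff (p * d + j) else 0 := by
    intro j d
    rw [Polynomial.finset_sum_coeff]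
    simp only [Polynomial.coeff_C_mul, Polynomial.coeff_X_pow, mul_ite, mul_one, mul_zero]
    exact Finset.sum_ite_eq (Finset.range (n / p + 1)) d _
  -- rewrite the p-th power as expand
  have key : ∀ j : Fin p,
      (((∑ k ∈ Finset.range (n / p + 1),
        Polynomial.C (a.coeff (p * k + (j : ℕ))) * Polynomial.X ^ k).map
          ((frobeniusEquiv F p).symm : F →+* F)) : Polynomial F) ^ p =
      Polynomial.expand F p (∑ k ∈ Finset.range (n / p + 1),
        Polynomial.C (a.coeff (p * k + (j : ℕ))) * Polynomial.X ^ k) := by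
    intro j
    rw [← Polynomial.map_frobenius_expand p, Polynomial.map_expand]
    congr 1
    rw [Polynomial.map_map]
    have hid : (frobenius F p).comp ((frobeniusEquiv F p).symm : F →+* F) = RingHom.id F :=
      RingHom.ext fun x => by simp [frobenius_apply_frobeniusEquiv_symm]
    rw [hid, Polynomial.map_id]
  simp only [key]
  ext m
  rw [Polynomial.finset_sum_coeff]
  have hterm : ∀ j : Fin p,
      (Polynomial.X ^ (j : ℕ) * Polynomial.expand F p (∑ k ∈ Finset.range (n / p + 1),
        Polynomial.C (a.coeff (p * k + (j : ℕ))) * Polynomial.X ^ k)).coeff m =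
      if (j : ℕ) = m % p then a.coeff m else 0 := by
    intro j
    rw [mul_comm, Polynomial.coeff_mul_X_pow']
    rcases le_or_gt (j : ℕ) m with hjm | hjm
    · rw [if_pos hjm, Polynomial.coeff_expand hp0, hcoeff]
      by_cases hj : (j : ℕ) = m % p
      · have hdvd : p ∣ m - (j : ℕ) := by
          have := Nat.div_add_mod m p
          exact ⟨m / p, by omega⟩
        rw [if_pos hdvd, if_pos hj]
        have hdiv : (m - (j : ℕ)) / p = m / p := by
          obtain ⟨c, hc⟩ := hdvd
          have h2 := Nat.div_add_mod m p
          have hc' : p * c = p * (m / p) := by omega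
          have hcm : c = m / p := Nat.eq_of_mul_eq_mul_left hp0 hc'
          rw [hc, hcm, Nat.mul_div_cancel_left _ hp0]
        rw [hdiv]
        by_cases hrange : m / p ∈ Finset.range (n / p + 1)
        · rw [if_pos hrange]
          congr 1
          have := Nat.div_add_mod m p
          omega
        · rw [if_neg hrange]
          have hm : n < m := by
            by_contra hh
            exact hrange (Finset.mem_range.mpr
              (Nat.lt_succ_of_le (Nat.div_le_div_right (Nat.le_of_not_lt hh))))
          exact (Polynomial.coeff_eq_zero_of_natDegree_lt (lt_of_le_of_lt ha hm)).symm
      · rw [if_neg hj]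
        have hndvd : ¬ p ∣ m - (j : ℕ) := by
          intro hd
          obtain ⟨c, hc⟩ := hd
          have hm : m = (j : ℕ) + p * c := by omega
          apply hj
          rw [hm, Nat.add_mul_mod_self_left, Nat.mod_eq_of_lt j.isLt]
        rw [if_neg hndvd]
    · rw [if_neg (Nat.not_le_of_lt hjm)]
      have : ¬ (j : ℕ) = m % p := by
        intro h
        exact absurd (lt_of_le_of_lt (Nat.mod_le m p) hjm) (by omega)
      rw [if_neg this]
  simp only [hterm]
  have hcond : ∀ j : Fin p, ((j : ℕ) = m % p) = (j = ⟨m % p, Nat.mod_lt m hp0⟩) := by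
    intro j
    simp [Fin.ext_iff]
  simp only [hcond]
  rw [Finset.sum_ite_eq' Finset.univ]
  simp

end Decomp

/-- The number of monic `a` of degree `n` with `P² ∣ f(a)` for some prime
`P` of degree `> n/2` is at most the number of tuples `a ∈ 𝔽_q[t]^p` with
`deg a_i ≤ ⌊n/p⌋` for all `i` and some prime `P` of degree `> n/2` dividing both `F(a)` and
`(∂F/∂t)(a)`. -/
theorem large_primes_count_le_Q {F : Type*} [Field F] [Fintype F] (p : ℕ) [CharP F p]
    (f : Polynomial (Polynomial F)) (n : ℕ) (hn : 1 ≤ n) :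
    {a : Polynomial F | a.Monic ∧ a.natDegree = n ∧
        ∃ P : Polynomial F, IsPrimePoly P ∧ n < 2 * P.natDegree ∧ P ^ 2 ∣ f.eval a}.ncard ≤
      {v : Fin p → Polynomial F | (∀ i, (v i).natDegree ≤ n / p) ∧
        ∃ P : Polynomial F, IsPrimePoly P ∧ n < 2 * P.natDegree ∧
          P ∣ MvPolynomial.eval v (bigF p f) ∧
          P ∣ MvPolynomial.eval v (pderivT (bigF p f))}.ncard := by
  classical
  have hp : p.Prime := CharP.char_is_prime F p
  haveI : Fact p.Prime := ⟨hp⟩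
  set S := {a : Polynomial F | a.Monic ∧ a.natDegree = n ∧
      ∃ P : Polynomial F, IsPrimePoly P ∧ n < 2 * P.natDegree ∧ P ^ 2 ∣ f.eval a} with hS
  set T := {v : Fin p → Polynomial F | (∀ i, (v i).natDegree ≤ n / p) ∧
      ∃ P : Polynomial F, IsPrimePoly P ∧ n < 2 * P.natDegree ∧
        P ∣ MvPolynomial.eval v (bigF p f) ∧
        P ∣ MvPolynomial.eval v (pderivT (bigF p f))} with hT
  -- the map
  set Φ : Polynomial F → (Fin p → Polynomial F) := fun a i =>
    (∑ k ∈ Finset.range (n / p + 1),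
      Polynomial.C (a.coeff (p * k + (i : ℕ))) * Polynomial.X ^ k).map
        ((frobeniusEquiv F p).symm : F →+* F) with hΦ
  have hΦsum : ∀ a : Polynomial F, a.natDegree ≤ n →
      ∑ j : Fin p, Polynomial.X ^ (j : ℕ) * (Φ a j) ^ p = a := fun a ha => decomp p n a ha
  -- degree bound
  have hΦdeg : ∀ a i, (Φ a i).natDegree ≤ n / p := by
    intro a i
    refine le_trans Polynomial.natDegree_map_le ?_
    refine Polynomial.natDegree_sum_le_of_forall_le _ _ fun k hk => ?_
    refine le_trans (Polynomial.natDegree_C_mul_le _ _) ?_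
    simp only [Polynomial.natDegree_X_pow]
    exact Nat.lt_succ_iff.mp (Finset.mem_range.mp hk)
  -- T is finite
  have hTfin : T.Finite := by
    have hinj : Set.InjOn
        (fun v : Fin p → Polynomial F => fun i => fun k : Fin (n / p + 1) => (v i).coeff k) T := by
      intro v hv w hw h
      funext i
      ext m
      rcases le_or_gt m (n / p) with hm | hm
      · have := congrFun (congrFun h i) ⟨m, Nat.lt_succ_of_le hm⟩
        simpa using this
      · rw [Polynomial.coeff_eq_zero_of_natDegree_lt (lt_of_le_of_lt (hv.1 i) hm),
          Polynomial.coeff_eq_zero_of_natDegree_lt (lt_of_le_of_lt (hw.1 i) hm)]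
    exact Set.Finite.of_finite_image (Set.toFinite _) hinj
  -- conclude via an injection
  refine Set.ncard_le_ncard_of_injOn Φ ?_ ?_ hTfin
  · rintro a ⟨hmon, hdeg, P, hP, hPd, hPP⟩
    have hsum := hΦsum a (le_of_eq hdeg)
    refine ⟨hΦdeg a, P, hP, hPd, ?_, ?_⟩
    · rw [eval_bigF, hsum]
      exact dvd_trans (dvd_pow_self P two_ne_zero) hPP
    · rw [derivative_eval_bigF, hsum]
      obtain ⟨g, hg⟩ := hPP
      rw [hg]
      refine ⟨Polynomial.C 2 * Polynomial.derivative P * g + P * Polynomial.derivative g, ?_⟩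
      rw [Polynomial.derivative_mul, Polynomial.derivative_pow]
      push_cast
      ring
  · intro a ha b hb h
    have hsa := hΦsum a (le_of_eq ha.2.1)
    have hsb := hΦsum b (le_of_eq hb.2.1)
    rw [← hsa, ← hsb, h]

end
end

section
/- Let 𝔽_q have characteristic p, let N ≥ 1 be an integer, let f ∈ 𝔽_q[t][x_1,…,x_N] and g ∈ 𝔽_q[t][x_1,…,x_{N−1}] be polynomials, and let f_1 ∈ 𝔽_q[t][x_1,…,x_{N−1}] be the coefficient of the highest power of x_N in f when f is viewed as a polynomial in x_N. Define S(n) = {a ∈ 𝔽_q[t]^N : deg a_i ≤ ⌊n/p⌋ for all i, and there exists a prime polynomial P with deg P > n/2 such that P ∣ f(a), P ∣ g(a_1,…,a_{N−1}), P ∤ f_1(a_1,…,a_{N−1}), and g(a_1,…,a_{N−1}) ≠ 0}. Then there is a constant C depending only on f, g and q such that |S(n)| ≤ C · q^{n(N−1)/p} for all n ≥ 1. -/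
open Polynomial

noncomputable section

open UniqueFactorizationMonoid


/-- degree bound for evaluation of a multivariate polynomial over F[t] -/
lemma evalDegBound {F : Type*} [Field F] {σ : Type*} (h : MvPolynomial σ (Polynomial F)) :
    ∃ A B : ℕ, ∀ (b : σ → Polynomial F) (m : ℕ), (∀ i, (b i).natDegree ≤ m) →
      (MvPolynomial.eval b h).natDegree ≤ A + B * m := by
  refine ⟨h.support.sup (fun e => (MvPolynomial.coeff e h).natDegree), h.totalDegree,
    fun b m hb => ?_⟩
  rw [MvPolynomial.eval_eq]
  refine Polynomial.natDegree_sum_le_of_forall_le _ _ (fun e he => ?_)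
  refine (Polynomial.natDegree_mul_le).trans (add_le_add (Finset.le_sup (f := fun e => (MvPolynomial.coeff e h).natDegree) he) ?_)
  · refine (Polynomial.natDegree_prod_le _ _).trans ?_
    calc ∑ i ∈ e.support, ((b i) ^ e i).natDegree
        ≤ ∑ i ∈ e.support, e i * m :=
          Finset.sum_le_sum fun i _ => (Polynomial.natDegree_pow_le).trans
            (Nat.mul_le_mul_left _ (hb i))
      _ = (∑ i ∈ e.support, e i) * m := by rw [Finset.sum_mul]
      _ ≤ h.totalDegree * m := Nat.mul_le_mul_right _ (MvPolynomial.le_totalDegree he)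

lemma degSetFinite {F : Type*} [Field F] [Fintype F] {ι : Type*} [Fintype ι] (m : ℕ) :
    {a : ι → Polynomial F | ∀ i, (a i).natDegree ≤ m}.Finite := by
  have hinj : Set.InjOn (fun (a : ι → Polynomial F) (i : ι) (j : Fin (m + 1)) => (a i).coeff j)
      {a : ι → Polynomial F | ∀ i, (a i).natDegree ≤ m} := by
    intro a ha a' ha' hEq
    funext i
    ext k
    by_cases hk : k ≤ m
    · have := congrFun (congrFun hEq i) ⟨k, Nat.lt_succ_of_le hk⟩
      simpa using this
    · rw [Polynomial.coeff_eq_zero_of_natDegree_lt ((ha i).trans_lt (lt_of_not_ge hk)),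
        Polynomial.coeff_eq_zero_of_natDegree_lt ((ha' i).trans_lt (lt_of_not_ge hk))]
  exact Set.Finite.of_finite_image (Set.toFinite _) hinj

lemma degSetCard {F : Type*} [Field F] [Fintype F] {ι : Type*} [Fintype ι] (m : ℕ) :
    {a : ι → Polynomial F | ∀ i, (a i).natDegree ≤ m}.ncard ≤
      Fintype.card F ^ ((m + 1) * Fintype.card ι) := by
  have hinj : Set.InjOn (fun (a : ι → Polynomial F) (i : ι) (j : Fin (m + 1)) => (a i).coeff j)
      {a : ι → Polynomial F | ∀ i, (a i).natDegree ≤ m} := by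
    intro a ha a' ha' hEq
    funext i
    ext k
    by_cases hk : k ≤ m
    · have := congrFun (congrFun hEq i) ⟨k, Nat.lt_succ_of_le hk⟩
      simpa using this
    · rw [Polynomial.coeff_eq_zero_of_natDegree_lt ((ha i).trans_lt (lt_of_not_ge hk)),
        Polynomial.coeff_eq_zero_of_natDegree_lt ((ha' i).trans_lt (lt_of_not_ge hk))]
  calc {a : ι → Polynomial F | ∀ i, (a i).natDegree ≤ m}.ncard
      = ((fun (a : ι → Polynomial F) (i : ι) (j : Fin (m + 1)) => (a i).coeff j) ''
          {a : ι → Polynomial F | ∀ i, (a i).natDegree ≤ m}).ncard :=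
        (Set.ncard_image_of_injOn hinj).symm
    _ ≤ (Set.univ : Set (ι → Fin (m + 1) → F)).ncard :=
        Set.ncard_le_ncard (Set.subset_univ _) (Set.toFinite _)
    _ = Fintype.card F ^ ((m + 1) * Fintype.card ι) := by
        classical
        rw [Set.ncard_univ, Nat.card_eq_fintype_card, Fintype.card_fun, Fintype.card_fun,
          Fintype.card_fin, ← pow_mul, mul_comm]

lemma ncard_le_of_subset_biUnion {α ι : Type*} {R : ι → Set α} (T : Finset ι) {s : Set α}
    (hsub : s ⊆ ⋃ i ∈ T, R i) (hfin : ∀ i ∈ T, (R i).Finite) {k : ℕ}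
    (hk : ∀ i ∈ T, (R i).ncard ≤ k) : s.ncard ≤ T.card * k := by
  classical
  induction T using Finset.induction_on generalizing s with
  | empty => simp only [Finset.notMem_empty, Set.iUnion_of_empty, Set.iUnion_empty,
      Set.subset_empty_iff] at hsub; simp [hsub]
  | insert a T hi IH =>
    rw [Finset.set_biUnion_insert] at hsub
    have hRa : (R a).Finite := hfin a (Finset.mem_insert_self a T)
    have hU : (⋃ i ∈ T, R i).Finite :=
      Set.Finite.biUnion T.finite_toSet (fun i hi => hfin i (Finset.mem_insert_of_mem hi))
    have hsfin : s.Finite := ((hRa.union hU).subset hsub)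
    calc s.ncard = ((s ∩ R a) ∪ (s \ R a)).ncard := by rw [Set.inter_union_diff]
      _ ≤ (s ∩ R a).ncard + (s \ R a).ncard := Set.ncard_union_le _ _
      _ ≤ k + T.card * k := by
          refine add_le_add ?_ ?_
          · exact le_trans (Set.ncard_le_ncard Set.inter_subset_right hRa)
              (hk a (Finset.mem_insert_self a T))
          · refine IH (fun x hx => ?_) (fun i hi => hfin i (Finset.mem_insert_of_mem hi))
              (fun i hi => hk i (Finset.mem_insert_of_mem hi))
            rcases hsub hx.1 with h | h
            · exact absurd h hx.2
            · exact h
      _ = (insert a T).card * k := by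
          rw [Finset.card_insert_of_notMem hi, add_mul, one_mul, add_comm]

lemma ncard_le_mul_of_fibers {α β : Type*} {s : Set α} (hs : s.Finite) (f : α → β)
    {t : Set β} (ht : t.Finite) (hmaps : ∀ a ∈ s, f a ∈ t) {k : ℕ}
    (hfib : ∀ b ∈ t, (s ∩ f ⁻¹' {b}).ncard ≤ k) : s.ncard ≤ k * t.ncard := by
  classical
  rw [Set.ncard_eq_toFinset_card _ hs, Set.ncard_eq_toFinset_card _ ht]
  refine Finset.card_le_mul_card_image_of_maps_to (t := ht.toFinset) (f := f)
    (fun a ha => ht.mem_toFinset.2 (hmaps a (hs.mem_toFinset.1 ha))) k (fun b hb => ?_)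
  have : {a ∈ hs.toFinset | f a = b} = Set.Finite.toFinset (hs.inter_of_left (f ⁻¹' {b})) := by
    ext x
    simp [Set.Finite.mem_toFinset, Set.mem_inter_iff]
  rw [this, ← Set.ncard_eq_toFinset_card _ (hs.inter_of_left _)]
  exact hfib b (ht.mem_toFinset.1 hb)

lemma degSetFinite1 {F : Type*} [Field F] [Fintype F] (m : ℕ) :
    {x : Polynomial F | x.natDegree ≤ m}.Finite := by
  have hinj : Set.InjOn (fun (x : Polynomial F) (j : Fin (m + 1)) => x.coeff j)
      {x : Polynomial F | x.natDegree ≤ m} := by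
    intro a ha a' ha' hEq
    ext k
    by_cases hk : k ≤ m
    · have := congrFun hEq ⟨k, Nat.lt_succ_of_le hk⟩
      simpa using this
    · rw [Polynomial.coeff_eq_zero_of_natDegree_lt (ha.trans_lt (lt_of_not_ge hk)),
        Polynomial.coeff_eq_zero_of_natDegree_lt (ha'.trans_lt (lt_of_not_ge hk))]
  exact Set.Finite.of_finite_image (Set.toFinite _) hinj

lemma rootBound {F : Type*} [Field F] {P : Polynomial F} (hP : Irreducible P)
    (h : Polynomial (Polynomial F)) {d : ℕ} (hd : h.natDegree ≤ d) (hld : ¬ P ∣ h.coeff d)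
    {M : ℕ} (hM : M < P.natDegree) :
    {x : Polynomial F | x.natDegree ≤ M ∧ P ∣ h.eval x}.Finite ∧
      {x : Polynomial F | x.natDegree ≤ M ∧ P ∣ h.eval x}.ncard ≤ d := by
  classical
  set I : Ideal (Polynomial F) := Ideal.span {P} with hI
  haveI : I.IsMaximal := PrincipalIdealRing.isMaximal_of_irreducible hP
  letI : Field (Polynomial F ⧸ I) := Ideal.Quotient.field I
  set χ : Polynomial F →+* (Polynomial F ⧸ I) := Ideal.Quotient.mk I with hχ
  have hdvd_iff : ∀ y : Polynomial F, χ y = 0 ↔ P ∣ y := by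
    intro y
    rw [hχ, Ideal.Quotient.eq_zero_iff_mem, hI, Ideal.mem_span_singleton]
  set H : Polynomial (Polynomial F ⧸ I) := h.map χ with hH
  have hHd : H.coeff d ≠ 0 := by
    rw [hH, Polynomial.coeff_map, Ne, hdvd_iff]
    exact hld
  have hHne : H ≠ 0 := fun hz => hHd (by simp [hz])
  have hHdeg : H.natDegree ≤ d := le_trans Polynomial.natDegree_map_le hd
  set t : Set (Polynomial F ⧸ I) := ↑H.roots.toFinset with ht
  have htfin : t.Finite := (H.roots.toFinset : Finset _).finite_toSet
  have hmem : ∀ x ∈ {x : Polynomial F | x.natDegree ≤ M ∧ P ∣ h.eval x}, χ x ∈ t := by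
    intro x hx
    simp only [ht, Finset.mem_coe, Multiset.mem_toFinset]
    rw [Polynomial.mem_roots']
    refine ⟨hHne, ?_⟩
    show H.eval (χ x) = 0
    rw [hH, Polynomial.eval_map, Polynomial.eval₂_at_apply, hdvd_iff]
    exact hx.2
  have hinj : Set.InjOn χ {x : Polynomial F | x.natDegree ≤ M ∧ P ∣ h.eval x} := by
    intro x hx y hy hxy
    by_contra hne
    have hsub : P ∣ x - y := by
      rw [← hdvd_iff, map_sub, hxy, sub_self]
    have hsubne : x - y ≠ 0 := sub_ne_zero_of_ne hne
    have := Polynomial.natDegree_le_of_dvd hsub hsubne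
    have h2 := (Polynomial.natDegree_sub_le x y).trans (max_le hx.1 hy.1)
    omega
  constructor
  · exact Set.Finite.of_finite_image (htfin.subset (Set.image_subset_iff.mpr hmem)) hinj
  · refine (Set.ncard_le_ncard_of_injOn χ hmem hinj htfin).trans ?_
    rw [ht, Set.ncard_coe_finset]
    exact (Multiset.toFinset_card_le _).trans ((Polynomial.card_roots' H).trans hHdeg)

lemma monic_irred_mem_normalizedFactors {F : Type*} [Field F] [DecidableEq F] [DecidableEq (Polynomial F)]
    {P G : Polynomial F} (hG : G ≠ 0) (hm : P.Monic) (hi : Irreducible P) (hdvd : P ∣ G) :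
    P ∈ (normalizedFactors G).toFinset := by
  obtain ⟨q, hqmem, hassoc⟩ := exists_mem_normalizedFactors_of_dvd hG hi hdvd
  have hq0 : q ≠ 0 := (prime_of_normalized_factor q hqmem).ne_zero
  have hqm : q.Monic := by
    have := normalize_normalized_factor q hqmem
    rw [← this]
    exact Polynomial.monic_normalize hq0
  rw [Multiset.mem_toFinset]
  rwa [Polynomial.eq_of_monic_of_associated hm hqm hassoc]

lemma sum_deg_filter_le {F : Type*} [Field F] [DecidableEq F] [DecidableEq (Polynomial F)]
    {G : Polynomial F} (hG : G ≠ 0) (pred : Polynomial F → Prop) [DecidablePred pred] :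
    ∑ P ∈ (normalizedFactors G).toFinset.filter pred, P.natDegree ≤ G.natDegree := by
  set T := (normalizedFactors G).toFinset.filter pred with hT
  have hval : T.val ≤ normalizedFactors G := by
    refine le_trans ?_ (Multiset.dedup_le _)
    rw [← Multiset.toFinset_val]
    exact Finset.val_le_iff.mpr (Finset.filter_subset _ _)
  have hne : ∀ P ∈ T, P ≠ 0 := by
    intro P hPT
    have : P ∈ normalizedFactors G := Multiset.mem_toFinset.1 (Finset.mem_filter.1 hPT).1
    exact (prime_of_normalized_factor P this).ne_zero
  have hprod_dvd : (∏ P ∈ T, P) ∣ G := by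
    have h1 : (∏ P ∈ T, P) = T.val.prod := by
      rw [Finset.prod_eq_multiset_prod, Multiset.map_id']
    rw [h1]
    exact dvd_trans (Multiset.prod_dvd_prod_of_le hval) (prod_normalizedFactors hG).dvd
  calc ∑ P ∈ T, P.natDegree = (∏ P ∈ T, P).natDegree := (Polynomial.natDegree_prod _ _ hne).symm
    _ ≤ G.natDegree := Polynomial.natDegree_le_of_dvd hprod_dvd hG


/-- Let `𝔽_q` have characteristic `p`, let `f ∈ 𝔽_q[t][x₀,x_1,…,x_N]`
(`N + 1 ≥ 1` variables, with `x₀` the distinguished variable), let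
`g ∈ 𝔽_q[t][x_1,…,x_N]`, and let `f₁ ∈ 𝔽_q[t][x_1,…,x_N]` be the coefficient of the
highest power of the distinguished variable in `f`. Let `S(n)` be the set of tuples
`a ∈ 𝔽_q[t]^{N+1}` with `deg a_i ≤ ⌊n/p⌋` for all `i` for which there is a prime `P` with
`deg P > n/2`, `P ∣ f(a)`, `P ∣ g(a_1,…,a_N)`, `P ∤ f₁(a_1,…,a_N)` and
`g(a_1,…,a_N) ≠ 0`. Then `|S(n)| ≤ C·q^{nN/p}` for a constant `C` depending only on
`f, g, q`. -/
theorem separated_variable_estimate {F : Type*} [Field F] [Fintype F] (p : ℕ) [CharP F p]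
    (N : ℕ) (f : MvPolynomial (Fin (N + 1)) (Polynomial F))
    (g : MvPolynomial (Fin N) (Polynomial F)) :
    ∃ C : ℝ, ∀ n : ℕ, 1 ≤ n →
      ({a : Fin (N + 1) → Polynomial F | (∀ i, (a i).natDegree ≤ n / p) ∧
          ∃ P : Polynomial F, IsPrimePoly P ∧ n < 2 * P.natDegree ∧
            P ∣ MvPolynomial.eval a f ∧
            P ∣ MvPolynomial.eval (a ∘ Fin.succ) g ∧
            ¬ P ∣ MvPolynomial.eval (a ∘ Fin.succ)
                ((MvPolynomial.finSuccEquiv (Polynomial F) N f).leadingCoeff) ∧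
            MvPolynomial.eval (a ∘ Fin.succ) g ≠ 0}.ncard : ℝ) ≤
        C * (Fintype.card F : ℝ) ^ ((n : ℝ) * (N : ℝ) / p) := by
  classical
  obtain ⟨A, B, hAB⟩ := evalDegBound g
  set d := (MvPolynomial.finSuccEquiv (Polynomial F) N f).natDegree with hd
  set fc := (MvPolynomial.finSuccEquiv (Polynomial F) N f).leadingCoeff with hfc
  have hp : p.Prime := CharP.char_is_prime F p
  set q : ℕ := Fintype.card F with hq
  have hq1 : (1 : ℝ) ≤ (q : ℝ) := by exact_mod_cast Fintype.card_pos
  set k : ℕ := (2 * A + B) * d with hk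
  refine ⟨(k : ℝ) * (q : ℝ) ^ N, fun n hn => ?_⟩
  set M := n / p with hM
  have hM2 : M ≤ n / 2 := Nat.div_le_div_left hp.two_le two_pos
  set S := {a : Fin (N + 1) → Polynomial F | (∀ i, (a i).natDegree ≤ n / p) ∧
          ∃ P : Polynomial F, IsPrimePoly P ∧ n < 2 * P.natDegree ∧
            P ∣ MvPolynomial.eval a f ∧
            P ∣ MvPolynomial.eval (a ∘ Fin.succ) g ∧
            ¬ P ∣ MvPolynomial.eval (a ∘ Fin.succ) fc ∧
            MvPolynomial.eval (a ∘ Fin.succ) g ≠ 0} with hS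
  have hSfin : S.Finite := (degSetFinite M).subset (fun a ha => ha.1)
  set t := {b : Fin N → Polynomial F | ∀ i, (b i).natDegree ≤ M} with htdef
  have htfin : t.Finite := degSetFinite M
  -- fiber bound
  have hfib : ∀ b ∈ t, (S ∩ (fun a => a ∘ Fin.succ) ⁻¹' {b}).ncard ≤ k := by
    intro b hb
    set h : Polynomial (Polynomial F) :=
      Polynomial.map (MvPolynomial.eval b) (MvPolynomial.finSuccEquiv (Polynomial F) N f) with hh
    set G := MvPolynomial.eval b g with hG
    set A0 := {x : Polynomial F | x.natDegree ≤ M ∧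
      ∃ P : Polynomial F, IsPrimePoly P ∧ n < 2 * P.natDegree ∧ P ∣ h.eval x ∧ P ∣ G ∧
        ¬ P ∣ MvPolynomial.eval b fc ∧ G ≠ 0} with hA0
    have hA0fin : A0.Finite := (degSetFinite1 M).subset (fun x hx => hx.1)
    have step1 : (S ∩ (fun a => a ∘ Fin.succ) ⁻¹' {b}).ncard ≤ A0.ncard := by
      refine Set.ncard_le_ncard_of_injOn (fun a => a 0) ?_ ?_ hA0fin
      · rintro a ⟨haS, hab⟩
        have hab' : a ∘ Fin.succ = b := hab
        have hcons : Fin.cons (a 0) b = a := by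
          rw [← hab']; exact Fin.cons_self_tail a
        obtain ⟨hadeg, P, hP1, hP2, hP3, hP4, hP5, hP6⟩ := haS
        have heval : MvPolynomial.eval a f = Polynomial.eval (a 0) h := by
          conv_lhs => rw [← hcons]
          rw [MvPolynomial.eval_eq_eval_mv_eval', hh]
        refine ⟨hadeg 0, P, hP1, hP2, ?_, ?_, ?_, ?_⟩
        · rwa [← heval]
        · rwa [hG, ← hab']
        · rwa [← hab']
        · rwa [hG, ← hab']
      · rintro a ⟨haS, hab⟩ a' ⟨haS', hab'⟩ h0
        have hb1 : a ∘ Fin.succ = b := hab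
        have hb2 : a' ∘ Fin.succ = b := hab'
        funext i
        refine Fin.cases ?_ (fun j => ?_) i
        · exact h0
        · have := congrFun (hb1.trans hb2.symm) j
          exact this
    refine step1.trans ?_
    -- now bound A0
    by_cases hGz : G = 0
    · have : A0 = ∅ := by
        ext x
        simp only [hA0, Set.mem_setOf_eq, Set.mem_empty_iff_false, iff_false]
        rintro ⟨-, P, -, -, -, -, -, hne⟩
        exact hne hGz
      simp [this]
    · set T := (normalizedFactors G).toFinset.filter
        (fun P => n < 2 * P.natDegree ∧ ¬ P ∣ MvPolynomial.eval b fc) with hT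
      have hTcard : T.card ≤ 2 * A + B := by
        have hsum := sum_deg_filter_le hGz
          (fun P => n < 2 * P.natDegree ∧ ¬ P ∣ MvPolynomial.eval b fc)
        have h1 : T.card * (n + 1) ≤ ∑ P ∈ T, 2 * P.natDegree := by
          have := Finset.card_nsmul_le_sum T (fun P => 2 * P.natDegree) (n + 1)
            (fun Q hQT => by
              have hQ := (Finset.mem_filter.1 hQT).2.1
              show n + 1 ≤ 2 * Q.natDegree
              omega)
          simpa [smul_eq_mul] using this
        have h2 : (∑ P ∈ T, 2 * P.natDegree) = 2 * ∑ P ∈ T, P.natDegree := by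
          rw [Finset.mul_sum]
        have hdegG : G.natDegree ≤ A + B * M := hAB b M hb
        have hsum' : ∑ P ∈ T, P.natDegree ≤ G.natDegree := by rw [hT]; exact hsum
        have h5 : T.card * (n + 1) ≤ 2 * (A + B * M) :=
          h1.trans (by rw [h2]; exact Nat.mul_le_mul_left 2 (hsum'.trans hdegG))
        have h3 : 2 * M ≤ n := by
          calc 2 * M ≤ 2 * (n / 2) := Nat.mul_le_mul_left 2 hM2
            _ ≤ n := by omega
        have h4 : T.card * (n + 1) ≤ (2 * A + B) * (n + 1) := by
          refine h5.trans ?_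
          nlinarith [Nat.mul_le_mul_left B h3]
        exact Nat.le_of_mul_le_mul_right h4 (Nat.succ_pos n)
      have hsub : A0 ⊆ ⋃ P ∈ T, {x : Polynomial F | x.natDegree ≤ M ∧ P ∣ h.eval x} := by
        rintro x ⟨hxdeg, P, ⟨hPm, hPi⟩, hP2, hP3, hP4, hP5, -⟩
        have hPT : P ∈ T := by
          rw [hT]
          exact Finset.mem_filter.2
            ⟨monic_irred_mem_normalizedFactors hGz hPm hPi hP4, hP2, hP5⟩
        exact Set.mem_biUnion hPT ⟨hxdeg, hP3⟩
      have hRP : ∀ P ∈ T, ({x : Polynomial F | x.natDegree ≤ M ∧ P ∣ h.eval x}).Finite ∧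
          ({x : Polynomial F | x.natDegree ≤ M ∧ P ∣ h.eval x}).ncard ≤ d := by
        intro P hPT
        rw [hT, Finset.mem_filter] at hPT
        obtain ⟨hPmem, hPdeg, hPld⟩ := hPT
        have hPirr : Irreducible P :=
          irreducible_of_normalized_factor P (Multiset.mem_toFinset.1 hPmem)
        have hhdeg : h.natDegree ≤ d := Polynomial.natDegree_map_le
        have hcoeff : h.coeff d = MvPolynomial.eval b fc := by
          rw [hh, Polynomial.coeff_map, hfc, Polynomial.leadingCoeff, hd]
        have hld : ¬ P ∣ h.coeff d := by rw [hcoeff]; exact hPld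
        have hMP : M < P.natDegree := by
          have : n / 2 < P.natDegree := by
            rw [Nat.div_lt_iff_lt_mul two_pos]
            omega
          omega
        exact rootBound hPirr h hhdeg hld hMP
      calc A0.ncard ≤ T.card * d :=
            ncard_le_of_subset_biUnion T hsub (fun P hP => (hRP P hP).1) (fun P hP => (hRP P hP).2)
        _ ≤ k := by rw [hk]; exact Nat.mul_le_mul_right d hTcard
  have hmain : S.ncard ≤ k * t.ncard :=
    ncard_le_mul_of_fibers hSfin _ htfin (fun a ha => fun i => (ha.1 (Fin.succ i))) hfib
  have htcard : t.ncard ≤ q ^ ((M + 1) * N) := by simpa using degSetCard (F := F) (ι := Fin N) M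
  have hnat : S.ncard ≤ k * q ^ ((M + 1) * N) :=
    hmain.trans (Nat.mul_le_mul_left k htcard)
  have hcast : (S.ncard : ℝ) ≤ (k : ℝ) * (q : ℝ) ^ ((M + 1) * N) := by exact_mod_cast hnat
  refine hcast.trans ?_
  have hsplit : (q : ℝ) ^ ((M + 1) * N) = (q : ℝ) ^ (M * N) * (q : ℝ) ^ N := by
    rw [← pow_add]; ring_nf
  have hexp : ((M * N : ℕ) : ℝ) ≤ (n : ℝ) * (N : ℝ) / (p : ℝ) := by
    have h1 : ((M : ℕ) : ℝ) ≤ (n : ℝ) / (p : ℝ) := by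
      rw [hM]; exact_mod_cast Nat.cast_div_le
    calc ((M * N : ℕ) : ℝ) = (M : ℝ) * (N : ℝ) := by push_cast; ring
      _ ≤ ((n : ℝ) / (p : ℝ)) * (N : ℝ) :=
          mul_le_mul_of_nonneg_right h1 (Nat.cast_nonneg N)
      _ = (n : ℝ) * (N : ℝ) / (p : ℝ) := by ring
  have hpow : (q : ℝ) ^ (M * N) ≤ (q : ℝ) ^ ((n : ℝ) * (N : ℝ) / (p : ℝ)) := by
    rw [← Real.rpow_natCast (q : ℝ) (M * N)]
    exact Real.rpow_le_rpow_of_exponent_le hq1 hexp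
  calc (k : ℝ) * (q : ℝ) ^ ((M + 1) * N)
      = (k : ℝ) * ((q : ℝ) ^ (M * N) * (q : ℝ) ^ N) := by rw [hsplit]
    _ ≤ (k : ℝ) * ((q : ℝ) ^ ((n : ℝ) * (N : ℝ) / (p : ℝ)) * (q : ℝ) ^ N) := by
        refine mul_le_mul_of_nonneg_left ?_ (Nat.cast_nonneg k)
        exact mul_le_mul_of_nonneg_right hpow (by positivity)
    _ = (k : ℝ) * (q : ℝ) ^ N * (q : ℝ) ^ ((n : ℝ) * (N : ℝ) / (p : ℝ)) := by ring

end
end
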